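/- Let k be a field of characteristic p > 0, 𝔽_p ⊆ k, and let t, u be indeterminates with k = 𝔽_p(t^p, u^p). Inside k(t,u)[X], the k-algebra B = k[X^p, t + X + uX^p] satisfies B ⊗_k k(t,u) ≅ k(t,u)^{[1]}, i.e., B is an 𝔸¹-form over k with respect to the extension k(t,u)/k. -/

import Mathlib

set_option synthInstance.maxHeartbeats 1000000
set_option maxHeartbeats 1000000

/-- `L = 𝔽_p(t,u)`, the rational function field in two variables over `𝔽_p`. -/
noncomputable abbrev Lfun (p : ℕ) [Fact p.Prime] : Type :=
  FractionRing (MvPolynomial (Fin 2) (ZMod p))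

/-- The indeterminate `t ∈ L`. -/
noncomputable abbrev tvar (p : ℕ) [Fact p.Prime] : Lfun p :=
  algebraMap (MvPolynomial (Fin 2) (ZMod p)) (Lfun p) (MvPolynomial.X 0)

/-- The indeterminate `u ∈ L`. -/
noncomputable abbrev uvar (p : ℕ) [Fact p.Prime] : Lfun p :=
  algebraMap (MvPolynomial (Fin 2) (ZMod p)) (Lfun p) (MvPolynomial.X 1)

/-- `k = 𝔽_p(tᵖ, uᵖ)` as an intermediate field of `𝔽_p ⊆ 𝔽_p(t,u)`. -/
noncomputable abbrev Kfun (p : ℕ) [Fact p.Prime] : IntermediateField (ZMod p) (Lfun p) :=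
  IntermediateField.adjoin (ZMod p) {tvar p ^ p, uvar p ^ p}

/-- `B = k[Xᵖ, t + X + uXᵖ]`, a `k`-subalgebra of `L[X]`. -/
noncomputable abbrev Bsub (p : ℕ) [Fact p.Prime] : Subalgebra (Kfun p) (Polynomial (Lfun p)) :=
  Algebra.adjoin (Kfun p)
    {(Polynomial.X : Polynomial (Lfun p)) ^ p,
      Polynomial.C (tvar p) + Polynomial.X + Polynomial.C (uvar p) * Polynomial.X ^ p}

open Polynomial in
/-- Key independence lemma: if `∑ q j * g ^ j = 0` with `derivative (q j) = 0`,
`derivative g = 1`, and `m < p`, then all `q j = 0`. -/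
theorem aux_zero {L : Type*} [Field L] (p : ℕ) [Fact p.Prime] [CharP L p]
    (g : Polynomial L) (hg : derivative g = 1) :
    ∀ (m : ℕ), m < p → ∀ (q : ℕ → Polynomial L), (∀ j, derivative (q j) = 0) →
      (∑ j ∈ Finset.range (m + 1), q j * g ^ j) = 0 → ∀ j ≤ m, q j = 0 := by
  intro m
  induction m with
  | zero =>
    intro _ q _ hsum j hj
    interval_cases j
    simpa using hsum
  | succ m ih =>
    intro hm q hd hsum
    have hder : ∑ j ∈ Finset.range (m + 1),
        (Polynomial.C ((j + 1 : ℕ) : L) * q (j + 1)) * g ^ j = 0 := by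
      have := congrArg derivative hsum
      rw [derivative_sum, map_zero] at this
      calc ∑ j ∈ Finset.range (m + 1), (Polynomial.C ((j + 1 : ℕ) : L) * q (j + 1)) * g ^ j
          = ∑ j ∈ Finset.range (m + 2), derivative (q j * g ^ j) := by
            rw [Finset.sum_range_succ' (fun j => derivative (q j * g ^ j)) (m + 1)]
            simp only [derivative_mul, derivative_pow, hg, hd, zero_mul, zero_add, mul_one,
              pow_zero, mul_zero, add_zero, Nat.add_sub_cancel]
            apply Finset.sum_congr rfl
            intro x _
            ring
        _ = 0 := this
    have hq' : ∀ j ≤ m, Polynomial.C ((j + 1 : ℕ) : L) * q (j + 1) = 0 := by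
      refine ih (by omega) _ (fun j => ?_) hder
      rw [derivative_C_mul, hd, mul_zero]
    have hqs : ∀ j, 1 ≤ j → j ≤ m + 1 → q j = 0 := by
      intro j h1 h2
      have h := hq' (j - 1) (by omega)
      have hj : j - 1 + 1 = j := by omega
      rw [hj] at h
      have hC : (Polynomial.C ((j : ℕ) : L)) ≠ 0 := by
        simp only [ne_eq, Polynomial.C_eq_zero]
        intro h0
        have hdvd : p ∣ j := (CharP.cast_eq_zero_iff L p j).mp h0
        have := Nat.le_of_dvd (by omega) hdvd
        omega
      exact (mul_eq_zero.mp h).resolve_left hC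
    intro j hj
    rcases Nat.eq_zero_or_pos j with rfl | hjpos
    · have : q 0 = 0 := by
        have := hsum
        rw [Finset.sum_range_succ'] at this
        simp only [pow_zero, mul_one] at this
        have h0 : ∑ i ∈ Finset.range (m + 1), q (i + 1) * g ^ (i + 1) = 0 := by
          apply Finset.sum_eq_zero
          intro i hi
          rw [hqs (i + 1) (by omega) (by simp at hi; omega), zero_mul]
        rw [h0, zero_add] at this
        exact this
      exact this
    · exact hqs j hjpos hj

open Polynomial in
theorem li_v {L : Type*} [Field L] (p : ℕ) [Fact p.Prime] [CharP L p]
    (g : Polynomial L) (hg : derivative g = 1) :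
    LinearIndependent L
      (fun ij : ℕ × Fin p => (X : Polynomial L) ^ (p * ij.1) * g ^ (ij.2 : ℕ)) := by
  have hp : 0 < p := (Fact.out (p := p.Prime)).pos
  rw [linearIndependent_iff']
  intro s c hsum ij hij
  set N : ℕ := (s.sup fun x => x.1) + 1 with hN
  set c' : ℕ × Fin p → L := fun x => if x ∈ s then c x else 0 with hc'
  set Q : ℕ → Polynomial L := fun j =>
    if h : j < p then ∑ i ∈ Finset.range N, Polynomial.C (c' (i, ⟨j, h⟩)) * X ^ (p * i)
    else 0 with hQdef
  have hQ : ∀ j : Fin p, Q (j : ℕ) =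
      ∑ i ∈ Finset.range N, Polynomial.C (c' (i, j)) * X ^ (p * i) := by
    intro j
    simp [hQdef, j.isLt]
  have hQsum : ∑ j ∈ Finset.range p, Q j * g ^ j = 0 := by
    rw [← Fin.sum_univ_eq_sum_range (fun j => Q j * g ^ j) p]
    calc ∑ j : Fin p, Q (j : ℕ) * g ^ (j : ℕ)
        = ∑ j : Fin p, ∑ i ∈ Finset.range N,
            Polynomial.C (c' (i, j)) * (X ^ (p * i) * g ^ (j : ℕ)) := by
          refine Finset.sum_congr rfl fun j _ => ?_
          rw [hQ j, Finset.sum_mul]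
          refine Finset.sum_congr rfl fun i _ => by ring
      _ = ∑ x ∈ Finset.range N ×ˢ (Finset.univ : Finset (Fin p)),
            Polynomial.C (c' x) * (X ^ (p * x.1) * g ^ (x.2 : ℕ)) := by
          rw [Finset.sum_product]
          rw [Finset.sum_comm]
      _ = ∑ x ∈ s, Polynomial.C (c' x) * (X ^ (p * x.1) * g ^ (x.2 : ℕ)) := by
          refine (Finset.sum_subset ?_ ?_).symm
          · intro x hx
            rw [Finset.mem_product]
            refine ⟨Finset.mem_range.mpr ?_, Finset.mem_univ _⟩
            exact Nat.lt_succ_of_le (Finset.le_sup (f := fun x : ℕ × Fin p => x.1) hx)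
          · intro x _ hxs
            simp [hc', hxs]
      _ = ∑ x ∈ s, c x • ((X : Polynomial L) ^ (p * x.1) * g ^ (x.2 : ℕ)) := by
          refine Finset.sum_congr rfl fun x hx => ?_
          rw [hc']
          simp only [hx, if_pos, smul_eq_C_mul]
      _ = 0 := hsum
  have hQzero : ∀ j ≤ p - 1, Q j = 0 := by
    refine aux_zero p g hg (p - 1) (by omega) Q (fun j => ?_) ?_
    · rw [hQdef]
      by_cases h : j < p
      · simp only [dif_pos h, derivative_sum]
        refine Finset.sum_eq_zero fun i _ => ?_
        rw [derivative_C_mul, derivative_X_pow]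
        simp [Nat.cast_mul, CharP.cast_eq_zero L p]
      · simp [dif_neg h]
    · have : p - 1 + 1 = p := by omega
      rw [this]; exact hQsum
  have hQ2 : Q (ij.2 : ℕ) = 0 := hQzero _ (by have := ij.2.isLt; omega)
  rw [hQ ij.2] at hQ2
  have hco := congrArg (fun q => Polynomial.coeff q (p * ij.1)) hQ2
  simp only [Polynomial.finset_sum_coeff, Polynomial.coeff_C_mul, Polynomial.coeff_X_pow,
    Polynomial.coeff_zero] at hco
  rw [Finset.sum_eq_single ij.1] at hco
  · simp only [if_pos rfl, mul_one] at hco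
    rw [hc'] at hco
    simp only [Prod.mk.eta, if_pos hij] at hco
    simpa using hco
  · intro b _ hb
    have : p * ij.1 ≠ p * b := fun h => hb (by
      have := Nat.eq_of_mul_eq_mul_left hp h.symm
      omega)
    simp [this]
  · intro h
    exfalso
    apply h
    refine Finset.mem_range.mpr ?_
    exact Nat.lt_succ_of_le (Finset.le_sup (f := fun x : ℕ × Fin p => x.1) hij)


namespace Stmt10Aux

open Polynomial

variable (p : ℕ) [Fact p.Prime]

/-- The generator `g = t + X + uXᵖ`. -/
noncomputable def gp : Polynomial (Lfun p) :=
  Polynomial.C (tvar p) + Polynomial.X + Polynomial.C (uvar p) * Polynomial.X ^ p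

/-- The would-be basis family `X^(p i) * g^j`, `0 ≤ j < p`. -/
noncomputable def vv : ℕ × Fin p → Polynomial (Lfun p) :=
  fun ij => Polynomial.X ^ (p * ij.1) * gp p ^ (ij.2 : ℕ)

theorem charL : CharP (Lfun p) p :=
  charP_of_injective_algebraMap
    (IsFractionRing.injective (MvPolynomial (Fin 2) (ZMod p)) (Lfun p)) p

theorem charLX : CharP (Polynomial (Lfun p)) p :=
  haveI := charL p
  charP_of_injective_algebraMap
    (by rw [Polynomial.algebraMap_eq]; exact Polynomial.C_injective) p

theorem deriv_gp : derivative (gp p) = 1 := by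
  haveI := charL p
  unfold gp
  rw [derivative_add, derivative_add, derivative_C, derivative_X, derivative_mul,
    derivative_C, derivative_X_pow]
  simp [CharP.cast_eq_zero (Lfun p) p]

theorem tmem : tvar p ^ p ∈ Kfun p :=
  IntermediateField.subset_adjoin _ _ (Set.mem_insert _ _)

theorem umem : uvar p ^ p ∈ Kfun p :=
  IntermediateField.subset_adjoin _ _ (Set.mem_insert_of_mem _ rfl)

theorem smul_eq (a : Kfun p) (q : Polynomial (Lfun p)) :
    a • q = Polynomial.C (a : Lfun p) * q := by
  rw [Algebra.smul_def, Polynomial.algebraMap_apply]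
  rfl

theorem gp_mem : gp p ∈ Bsub p :=
  Algebra.subset_adjoin (Set.mem_insert_of_mem _ rfl)

theorem Xp_mem : (Polynomial.X : Polynomial (Lfun p)) ^ p ∈ Bsub p :=
  Algebra.subset_adjoin (Set.mem_insert _ _)

theorem vv_mem (ij : ℕ × Fin p) : vv p ij ∈ Bsub p := by
  unfold vv
  exact mul_mem (by rw [pow_mul]; exact pow_mem (Xp_mem p) _)
    (pow_mem (gp_mem p) _)

theorem gp_pow_p : gp p ^ p = Polynomial.C (tvar p ^ p) + Polynomial.X ^ p
    + Polynomial.C (uvar p ^ p) * Polynomial.X ^ (p * p) := by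
  haveI := charLX p
  unfold gp
  rw [add_pow_char, add_pow_char, mul_pow, ← Polynomial.C_pow, ← Polynomial.C_pow, ← pow_mul]

theorem vv_mul_mem (a b : ℕ × Fin p) :
    vv p a * vv p b ∈ Submodule.span (Kfun p) (Set.range (vv p)) := by
  have hp : 0 < p := (Fact.out (p := p.Prime)).pos
  by_cases h : (a.2 : ℕ) + (b.2 : ℕ) < p
  · have : vv p a * vv p b = vv p (a.1 + b.1, ⟨(a.2 : ℕ) + (b.2 : ℕ), h⟩) := by
      unfold vv
      simp only
      rw [mul_add, pow_add, pow_add]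
      ring
    rw [this]
    exact Submodule.subset_span ⟨_, rfl⟩
  · push_neg at h
    have hJ : (a.2 : ℕ) + (b.2 : ℕ) - p < p := by
      have := a.2.isLt; have := b.2.isLt; omega
    set J : ℕ := (a.2 : ℕ) + (b.2 : ℕ) - p with hJdef
    have key : vv p a * vv p b =
        (⟨tvar p ^ p, tmem p⟩ : Kfun p) • vv p (a.1 + b.1, ⟨J, hJ⟩)
          + vv p (a.1 + b.1 + 1, ⟨J, hJ⟩)
          + (⟨uvar p ^ p, umem p⟩ : Kfun p) • vv p (a.1 + b.1 + p, ⟨J, hJ⟩) := by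
      rw [smul_eq, smul_eq]
      unfold vv
      simp only
      have hsum : (a.2 : ℕ) + (b.2 : ℕ) = J + p := by omega
      have h1 : gp p ^ (a.2 : ℕ) * gp p ^ (b.2 : ℕ) = gp p ^ J * gp p ^ p := by
        rw [← pow_add, hsum, pow_add]
      calc X ^ (p * a.1) * gp p ^ (a.2 : ℕ) * (X ^ (p * b.1) * gp p ^ (b.2 : ℕ))
          = X ^ (p * a.1) * X ^ (p * b.1) * (gp p ^ (a.2 : ℕ) * gp p ^ (b.2 : ℕ)) := by ring
        _ = X ^ (p * a.1) * X ^ (p * b.1) * (gp p ^ J *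
              (Polynomial.C (tvar p ^ p) + Polynomial.X ^ p
                + Polynomial.C (uvar p ^ p) * Polynomial.X ^ (p * p))) := by
            rw [h1, gp_pow_p]
        _ = _ := by
            simp only [Nat.mul_add, Nat.mul_one, pow_add]
            ring
    rw [key]
    refine add_mem (add_mem ?_ ?_) ?_
    · exact Submodule.smul_mem _ _ (Submodule.subset_span ⟨_, rfl⟩)
    · exact Submodule.subset_span ⟨_, rfl⟩
    · exact Submodule.smul_mem _ _ (Submodule.subset_span ⟨_, rfl⟩)

end Stmt10Aux

namespace Stmt10Aux

open Polynomial

variable (p : ℕ) [Fact p.Prime]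

theorem one_mem_range : (1 : Polynomial (Lfun p)) ∈ Set.range (vv p) := by
  have hp : 0 < p := (Fact.out (p := p.Prime)).pos
  refine ⟨(0, ⟨0, hp⟩), ?_⟩
  unfold vv
  simp

theorem Bsub_le_span :
    Subalgebra.toSubmodule (Bsub p) ≤ Submodule.span (Kfun p) (Set.range (vv p)) := by
  have hp : 0 < p := (Fact.out (p := p.Prime)).pos
  intro x hx
  rw [Subalgebra.mem_toSubmodule] at hx
  induction hx using Algebra.adjoin_induction with
  | mem y hy =>
    rcases hy with rfl | hy
    · refine Submodule.subset_span ⟨(1, ⟨0, hp⟩), ?_⟩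
      unfold vv
      simp [Nat.mul_one]
    · rw [Set.mem_singleton_iff] at hy
      subst hy
      refine Submodule.subset_span ⟨(0, ⟨1, (Fact.out (p := p.Prime)).one_lt⟩), ?_⟩
      unfold vv gp
      simp
  | algebraMap r =>
    have : algebraMap (Kfun p) (Polynomial (Lfun p)) r = r • (1 : Polynomial (Lfun p)) := by
      rw [Algebra.smul_def, mul_one]
    rw [this]
    exact Submodule.smul_mem _ _ (Submodule.subset_span (one_mem_range p))
  | add x y hx hy ihx ihy => exact add_mem ihx ihy
  | mul x y hx hy ihx ihy =>
    have hle : Submodule.span (Kfun p) (Set.range (vv p))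
        * Submodule.span (Kfun p) (Set.range (vv p))
        ≤ Submodule.span (Kfun p) (Set.range (vv p)) := by
      rw [Submodule.span_mul_span]
      rw [Submodule.span_le]
      rintro z hz
      rw [Set.mem_mul] at hz
      obtain ⟨w1, ⟨a, rfl⟩, w2, ⟨b, rfl⟩, rfl⟩ := hz
      exact vv_mul_mem p a b
    exact hle (Submodule.mul_mem_mul ihx ihy)

/-- `vv` as a family in `Bsub`. -/
noncomputable def beta : ℕ × Fin p → Bsub p := fun ij => ⟨vv p ij, vv_mem p ij⟩

theorem li_vv : LinearIndependent (Lfun p) (vv p) := by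
  haveI := charL p
  exact li_v p (gp p) (deriv_gp p)

theorem li_vv_K : LinearIndependent (Kfun p) (vv p) := by
  refine (li_vv p).restrict_scalars ?_
  intro a b hab
  apply Subtype.ext
  simpa [Algebra.smul_def, mul_one] using hab

theorem li_beta : LinearIndependent (Kfun p) (beta p) := by
  have h : vv p = (Bsub p).val.toLinearMap ∘ beta p := rfl
  exact LinearIndependent.of_comp (Bsub p).val.toLinearMap (h ▸ li_vv_K p)

theorem span_beta : ⊤ ≤ Submodule.span (Kfun p) (Set.range (beta p)) := by
  intro x _
  have hx : (x : Polynomial (Lfun p)) ∈ Submodule.span (Kfun p) (Set.range (vv p)) :=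
    Bsub_le_span p (by rw [Subalgebra.mem_toSubmodule]; exact x.2)
  have himg : Set.range (vv p) = (Bsub p).val.toLinearMap '' Set.range (beta p) := by
    rw [← Set.range_comp]; rfl
  rw [himg, ← Submodule.map_span] at hx
  obtain ⟨y, hy, hyx⟩ := hx
  have : y = x := Subtype.ext hyx
  rwa [← this]

/-- The `k`-basis of `B`. -/
noncomputable def bB : Module.Basis (ℕ × Fin p) (Kfun p) (Bsub p) :=
  Module.Basis.mk (li_beta p) (span_beta p)


open Polynomial

set_option maxHeartbeats 4000000 in
/-- The multiplication map `L ⊗[k] B →ₐ[L] L[X]`. -/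
noncomputable def phi : TensorProduct (Kfun p) (Lfun p) (Bsub p) →ₐ[Lfun p] Polynomial (Lfun p) :=
  Algebra.TensorProduct.lift (Algebra.ofId (Lfun p) (Polynomial (Lfun p)))
    ((Bsub p).val) (fun _ _ => Commute.all _ _)

set_option maxHeartbeats 4000000 in
theorem phi_tmul (l : Lfun p) (b : Bsub p) :
    phi p (l ⊗ₜ b) = Polynomial.C l * (b : Polynomial (Lfun p)) := by
  rw [phi, Algebra.TensorProduct.lift_tmul, Algebra.ofId_apply, Polynomial.algebraMap_eq]
  rfl

set_option maxHeartbeats 4000000 in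
theorem phi_inj : Function.Injective (phi p) := by
  classical
  let bT : Module.Basis (ℕ × Fin p) (Lfun p) (TensorProduct (Kfun p) (Lfun p) (Bsub p)) :=
    Module.Basis.baseChange (Lfun p) (bB p)
  have hcomp : (phi p).toLinearMap =
      (Finsupp.linearCombination (Lfun p) (vv p)).comp
        (bT.repr : TensorProduct (Kfun p) (Lfun p) (Bsub p) ≃ₗ[Lfun p] _).toLinearMap := by
    apply bT.ext
    intro i
    simp only [LinearMap.comp_apply, LinearEquiv.coe_toLinearMap, Module.Basis.repr_self,
      Finsupp.linearCombination_single, one_smul, AlgHom.toLinearMap_apply]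
    rw [show bT i = (1 : Lfun p) ⊗ₜ (bB p i) from Module.Basis.baseChange_apply _ _ _,
      phi_tmul]
    rw [show bB p i = beta p i from Module.Basis.mk_apply _ _ _]
    simp [beta]
  have h1 : Function.Injective (Finsupp.linearCombination (Lfun p) (vv p)) :=
    LinearMap.ker_eq_bot.mp (linearIndependent_iff_ker.mp (li_vv p))
  intro x y hxy
  apply bT.repr.injective
  apply h1
  have hx := LinearMap.congr_fun hcomp x
  have hy := LinearMap.congr_fun hcomp y
  simp only [LinearMap.comp_apply, LinearEquiv.coe_toLinearMap,
    AlgHom.toLinearMap_apply] at hx hy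
  rw [← hx, ← hy]
  exact hxy

set_option maxHeartbeats 4000000 in
theorem phi_surj : Function.Surjective (phi p) := by
  have hg : gp p ∈ (phi p).range := by
    rw [AlgHom.mem_range]
    exact ⟨(1 : Lfun p) ⊗ₜ ⟨gp p, gp_mem p⟩, by rw [phi_tmul]; simp⟩
  have hXp : (Polynomial.X : Polynomial (Lfun p)) ^ p ∈ (phi p).range := by
    rw [AlgHom.mem_range]
    exact ⟨(1 : Lfun p) ⊗ₜ ⟨Polynomial.X ^ p, Xp_mem p⟩, by rw [phi_tmul]; simp⟩
  have ht : Polynomial.C (tvar p) ∈ (phi p).range := by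
    have := (phi p).range.algebraMap_mem (tvar p)
    rwa [Polynomial.algebraMap_eq] at this
  have hu : Polynomial.C (uvar p) ∈ (phi p).range := by
    have := (phi p).range.algebraMap_mem (uvar p)
    rwa [Polynomial.algebraMap_eq] at this
  have hXmem : (Polynomial.X : Polynomial (Lfun p)) ∈ (phi p).range := by
    have hX_eq : (Polynomial.X : Polynomial (Lfun p)) =
        gp p - Polynomial.C (tvar p) - Polynomial.C (uvar p) * Polynomial.X ^ p := by
      unfold gp; ring
    rw [hX_eq]
    exact sub_mem (sub_mem hg ht) (mul_mem hu hXp)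
  have htop : (⊤ : Subalgebra (Lfun p) (Polynomial (Lfun p))) ≤ (phi p).range := by
    rw [← Polynomial.adjoin_X]
    exact Algebra.adjoin_le (Set.singleton_subset_iff.mpr hXmem)
  intro q
  exact htop (Algebra.mem_top : q ∈ ⊤)

end Stmt10Aux

set_option maxHeartbeats 4000000 in
/-- `B = k[Xᵖ, t + X + uXᵖ]` satisfies `B ⊗_k k(t,u) ≅ k(t,u)^{[1]}`,
i.e. `B` is an `𝔸¹`-form over `k = 𝔽_p(tᵖ,uᵖ)` with respect to `𝔽_p(t,u)/k`. -/
theorem stmt10 (p : ℕ) [Fact p.Prime] :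
    Nonempty ((TensorProduct (Kfun p) (Lfun p) (Bsub p)) ≃ₐ[Lfun p] Polynomial (Lfun p)) :=
  ⟨AlgEquiv.ofBijective (Stmt10Aux.phi p) ⟨Stmt10Aux.phi_inj p, Stmt10Aux.phi_surj p⟩⟩
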